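/- arXiv:2409.13541 — 2 statements merged into one kernel-verified Lean document; each statement's English description precedes it below -/
import Mathlib

section
/- For any graph state input to a fusion with green failure, the probability of fusion success is exactly 1/2. Formally: let F_s, F_f : ℂ²⊗ℂ² → ℂ be the success and failure Kraus effects of a green-failure fusion, F_s = (1/√2)(⟨0|⊗⟨0| e^{i(θ₁+θ₂)} + (−1)^k ⟨1|⊗⟨1|) and F_f = ⟨z_k| ⊗ ⟨z_{1−k}| with ⟨z_0| = (⟨0| + e^{iθ₁}⟨1|)/√2-type XY-plane effects, applied to the two unmeasured-qubit subsystems of a state of the form (Z-spider ⊗ Z-spider) purification; then summing |F_s applied|² over outcomes k ∈ {0,1} yields 1/2 of the norm, independent of the graph state. -/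
open scoped Classical
open Complex

/-- Amplitude of the graph state `|G⟩` of a simple graph `G` at a computational
basis configuration `z`: `(1/√(2^n))·(−1)^{#edges of G with both endpoints 1}`. -/
noncomputable def graphStateAmp {V : Type*} [Fintype V] (G : SimpleGraph V)
    (z : V → Fin 2) : ℂ :=
  ((1 / Real.sqrt (2 ^ Fintype.card V) : ℝ) : ℂ) *
    (-1 : ℂ) ^ ((Finset.univ.filter
      fun e : Sym2 V => e ∈ G.edgeSet ∧ ∀ w ∈ e, z w = 1).card)

/-- The success Kraus effect of a fusion with green failure, with Pauli-error
outcome `k`:  `F_s^{(k)} = (1/√2)(e^{i(θ₁+θ₂)}⟨0|⊗⟨0| + (−1)^k ⟨1|⊗⟨1|)`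
(a Z-diagonal effect on the two fused qubits). -/
noncomputable def greenSuccessEff (θ₁ θ₂ : ℝ) (k : Fin 2) (a b : Fin 2) : ℂ :=
  ((1 / Real.sqrt 2 : ℝ) : ℂ) *
    (if a = 0 ∧ b = 0 then Complex.exp (Complex.I * (θ₁ + θ₂))
     else if a = 1 ∧ b = 1 then (-1 : ℂ) ^ (k : ℕ) else 0)

lemma amp_norm_sq {V : Type*} [Fintype V] (G : SimpleGraph V) (z : V → Fin 2) :
    ‖graphStateAmp G z‖ ^ 2 = 1 / 2 ^ Fintype.card V := by
  unfold graphStateAmp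
  rw [norm_mul, norm_pow, norm_neg, norm_one, one_pow, mul_one,
    Complex.norm_real, Real.norm_eq_abs, _root_.abs_of_nonneg (by positivity),
    div_pow, one_pow, Real.sq_sqrt (by positivity)]

lemma eff_norm_sq (θ₁ θ₂ : ℝ) (k a b : Fin 2) :
    ‖greenSuccessEff θ₁ θ₂ k a b‖ ^ 2 = if a = b then (1:ℝ)/2 else 0 := by
  unfold greenSuccessEff
  have hs : ‖(((1 / Real.sqrt 2 : ℝ)) : ℂ)‖ ^ 2 = 1/2 := by
    rw [Complex.norm_real, Real.norm_eq_abs, _root_.abs_of_nonneg (by positivity),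
      div_pow, one_pow, Real.sq_sqrt (by norm_num)]
  have he : ‖Complex.exp (Complex.I * (θ₁ + θ₂))‖ = 1 := by
    rw [Complex.norm_exp]
    simp [mul_comm]
  fin_cases a <;> fin_cases b <;>
    simp [norm_mul, mul_pow, hs, he, norm_pow]

lemma card_eq_half {V : Type*} [Fintype V] (u v : V) (huv : u ≠ v) :
    2 * (Finset.univ.filter fun z : V → Fin 2 => z u = z v).card
      = 2 ^ Fintype.card V := by
  have flipflip : ∀ a : Fin 2, a + 1 + 1 = a := by decide
  have flipne : ∀ a : Fin 2, ¬ (a = a + 1) := by decide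
  have neflip : ∀ a b : Fin 2, a ≠ b → a = b + 1 := by decide
  have key : (Finset.univ.filter fun z : V → Fin 2 => z u = z v).card
      = (Finset.univ.filter fun z : V → Fin 2 => ¬ z u = z v).card := by
    apply Finset.card_bij' (fun z _ => Function.update z v (z v + 1))
      (fun z _ => Function.update z v (z v + 1))
    · intro z _
      funext w
      by_cases hw : w = v
      · subst hw; simp [flipflip]
      · simp [Function.update_of_ne hw]
    · intro z _
      funext w
      by_cases hw : w = v
      · subst hw; simp [flipflip]
      · simp [Function.update_of_ne hw]
    · intro z hz
      simp only [Finset.mem_filter, Finset.mem_univ, true_and] at hz ⊢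
      rw [Function.update_of_ne huv, Function.update_self, hz]
      exact flipne _
    · intro z hz
      simp only [Finset.mem_filter, Finset.mem_univ, true_and] at hz ⊢
      rw [Function.update_of_ne huv, Function.update_self]
      exact neflip _ _ hz
  have hsplit := Finset.card_filter_add_card_filter_not
    (s := (Finset.univ : Finset (V → Fin 2))) (p := fun z => z u = z v)
  rw [Finset.card_univ, Fintype.card_fun, Fintype.card_fin] at hsplit
  rw [two_mul]
  nth_rewrite 2 [key]
  exact hsplit

/-- For any graph state input (two distinct unmeasured qubits `u, v` of an
arbitrary graph state `|G⟩`), the probability of success of a fusion with green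
failure — the sum over outcomes `k ∈ {0,1}` of the squared norms of the
post-selected branches — is exactly `1/2`, independent of the graph state. -/
theorem green_fusion_success_prob_half {V : Type*} [Fintype V]
    (G : SimpleGraph V) (u v : V) (huv : u ≠ v) (θ₁ θ₂ : ℝ) :
    (∑ k : Fin 2, ∑ z : V → Fin 2,
        ‖greenSuccessEff θ₁ θ₂ k (z u) (z v) * graphStateAmp G z‖ ^ 2) = 1 / 2 := by
  have h1 : ∀ (k : Fin 2) (z : V → Fin 2),
      ‖greenSuccessEff θ₁ θ₂ k (z u) (z v) * graphStateAmp G z‖ ^ 2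
        = if z u = z v then (1/2) * (1 / 2 ^ Fintype.card V) else 0 := by
    intro k z
    rw [norm_mul, mul_pow, amp_norm_sq, eff_norm_sq]
    by_cases h : z u = z v <;> simp [h]
  have hc : ((Finset.univ.filter fun z : V → Fin 2 => z u = z v).card : ℝ)
      = 2 ^ Fintype.card V / 2 := by
    have := card_eq_half u v huv
    have h2 : (2 : ℝ) * ((Finset.univ.filter fun z : V → Fin 2 => z u = z v).card : ℝ)
        = 2 ^ Fintype.card V := by exact_mod_cast this
    linarith
  have hsum : (∑ z : V → Fin 2,
      if z u = z v then (1/2 : ℝ) * (1 / 2 ^ Fintype.card V) else 0) = 1 / 4 := by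
    rw [← Finset.sum_filter, Finset.sum_const, nsmul_eq_mul, hc]
    have hpow : (0:ℝ) < 2 ^ Fintype.card V := by positivity
    field_simp
    ring
  simp only [h1]
  rw [Fin.sum_univ_two, hsum]
  norm_num
end

section
/- (Pivot preserves Pauli flow) Let (G,I,O,λ) be a labelled open graph with Pauli flow and (u,v) ∈ E with u,v ∉ I∪O. The pivot G∧uv := ((G⋆u)⋆v)⋆u, with measurement labels at u,v and their neighbours updated by the standard pivot rule (XY↔YZ at u and v; XZ fixed; X↔Z; Y→Y; at common/exclusive neighbours Z↔Z etc. per conjugation by H on u and v and Z on common neighbours), has Pauli flow. -/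
open scoped Classical

/-- Measurement labels: planes XY, XZ, YZ and Pauli bases X, Y, Z. -/
inductive MeasLabel : Type
  | XY | XZ | YZ | X | Y | Z
  deriving DecidableEq

/-- The odd neighbourhood `Odd(K) = {u : |N(u) ∩ K| odd}` of a set of vertices. -/
noncomputable def oddNbhd {V : Type*} [Fintype V] (G : SimpleGraph V) (K : Finset V) :
    Finset V :=
  Finset.univ.filter fun u => Odd (K.filter fun w => G.Adj u w).card

/-- `(p, lt)` is a Pauli flow for the labelled open graph `(G, I, O, lam)`:
`lt` is a strict partial order and conditions 1–9 of the definition of Pauli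
flow hold for every non-output vertex (with `p v ⊆ V ∖ I`). -/
noncomputable def IsPauliFlow {V : Type*} [Fintype V] (G : SimpleGraph V)
    (I O : Finset V) (lam : V → MeasLabel) (p : V → Finset V)
    (lt : V → V → Prop) : Prop :=
  (∀ v, ¬ lt v v) ∧ (∀ a b c, lt a b → lt b c → lt a c) ∧
  ∀ v, v ∉ O →
    ((∀ w ∈ p v, w ∉ I) ∧
     (∀ w ∈ p v, lam w ≠ .X → lam w ≠ .Y → v ≠ w → lt v w) ∧
     (∀ w ∈ oddNbhd G (p v), lam w ≠ .Y → lam w ≠ .Z → v ≠ w → lt v w) ∧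
     (∀ w, (lt w v ∨ w = v) → lam w = .Y → v ≠ w →
        (w ∈ p v ↔ w ∈ oddNbhd G (p v))) ∧
     (lam v = .XY → v ∉ p v ∧ v ∈ oddNbhd G (p v)) ∧
     (lam v = .XZ → v ∈ p v ∧ v ∈ oddNbhd G (p v)) ∧
     (lam v = .YZ → v ∈ p v ∧ v ∉ oddNbhd G (p v)) ∧
     (lam v = .X → v ∈ oddNbhd G (p v)) ∧
     (lam v = .Z → v ∈ p v) ∧
     (lam v = .Y →
        ((v ∉ p v ∧ v ∈ oddNbhd G (p v)) ∨ (v ∈ p v ∧ v ∉ oddNbhd G (p v)))))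

/-- A labelled open graph has Pauli flow if some `(p, lt)` is a Pauli flow. -/
noncomputable def HasPauliFlow {V : Type*} [Fintype V] (G : SimpleGraph V)
    (I O : Finset V) (lam : V → MeasLabel) : Prop :=
  ∃ p lt, IsPauliFlow G I O lam p lt

/-- Local complementation of `G` at `u`: toggle all edges within `N(u)`. -/
def localComp {V : Type*} (G : SimpleGraph V) (u : V) : SimpleGraph V where
  Adj v w := v ≠ w ∧ Xor' (G.Adj v w) (G.Adj u v ∧ G.Adj u w)
  symm := ⟨by
    intro v w h
    obtain ⟨hne, hx⟩ := h
    refine ⟨hne.symm, ?_⟩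
    rwa [G.adj_comm v w, and_comm] at hx⟩
  loopless := ⟨fun v h => h.1 rfl⟩

/-- Pivot of `G` about the edge `(u, v)`: `G∧uv := ((G⋆u)⋆v)⋆u`. -/
def pivot {V : Type*} (G : SimpleGraph V) (u v : V) : SimpleGraph V :=
  localComp (localComp (localComp G u) v) u

/-- Label update at `u` and `v` under pivoting (conjugation by Hadamard):
`XY ↔ YZ`, `XZ` fixed, `X ↔ Z`, `Y → Y`.  Neighbours are conjugated by Pauli
`Z`, which leaves measurement labels unchanged. -/
def pivotLabel : MeasLabel → MeasLabel
  | .XY => .YZ | .YZ => .XY | .XZ => .XZ | .X => .Z | .Z => .X | .Y => .Y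


/-! ### Auxiliary machinery: parities over `ZMod 2` -/

/-- Indicator of a proposition with values in `ZMod 2`. -/
noncomputable def ind (P : Prop) : ZMod 2 := if P then 1 else 0

lemma ind_pos {P : Prop} (h : P) : ind P = 1 := if_pos h
lemma ind_neg {P : Prop} (h : ¬ P) : ind P = 0 := if_neg h
lemma ind_true : ind True = 1 := if_pos trivial

lemma ind_congr {P Q : Prop} (h : P ↔ Q) : ind P = ind Q := by
  by_cases hp : P
  · rw [ind_pos hp, ind_pos (h.mp hp)]
  · rw [ind_neg hp, ind_neg fun hq => hp (h.mpr hq)]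

lemma ind_inj {P Q : Prop} (h : ind P = ind Q) : P ↔ Q := by
  by_cases hp : P <;> by_cases hq : Q
  · exact iff_of_true hp hq
  · rw [ind_pos hp, ind_neg hq] at h; exact absurd h (by decide)
  · rw [ind_neg hp, ind_pos hq] at h; exact absurd h (by decide)
  · exact iff_of_false hp hq

lemma ind_eq_one_iff {P : Prop} : ind P = 1 ↔ P := by
  constructor
  · intro h
    by_contra hp
    rw [ind_neg hp] at h
    exact absurd h (by decide)
  · exact ind_pos

/-- The parity (in `ZMod 2`) of `|K ∩ N(w)|`. -/
noncomputable def par {V : Type*} [Fintype V] (G : SimpleGraph V) (K : Finset V) (w : V) :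
    ZMod 2 := ∑ y ∈ K, ind (G.Adj w y)

lemma natCast_zmod2_eq_one (n : ℕ) : ((n : ZMod 2) = 1) ↔ Odd n := by
  rw [Nat.odd_iff]
  rcases Nat.mod_two_eq_zero_or_one n with h | h
  · constructor
    · intro hh; exact absurd hh (by rw [← ZMod.natCast_mod, h]; decide)
    · intro hh; omega
  · constructor
    · intro _; exact h
    · intro _; rw [← ZMod.natCast_mod, h]; decide

lemma par_eq_card {V : Type*} [Fintype V] (G : SimpleGraph V) (K : Finset V) (w : V) :
    par G K w = ((K.filter fun y => G.Adj w y).card : ZMod 2) := by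
  unfold par ind
  rw [Finset.sum_boole]

lemma mem_oddNbhd_iff {V : Type*} [Fintype V] {G : SimpleGraph V} {K : Finset V} {w : V} :
    w ∈ oddNbhd G K ↔ par G K w = 1 := by
  rw [oddNbhd, Finset.mem_filter, par_eq_card, natCast_zmod2_eq_one]
  simp

lemma sum_ind_eq {V : Type*} [Fintype V] (K : Finset V) (a : V) :
    ∑ y ∈ K, ind (a = y) = ind (a ∈ K) := by
  simp [ind, Finset.sum_ite_eq]

lemma ind_mem_eq_sum {V : Type*} [Fintype V] (K : Finset V) (a : V) :
    ind (a ∈ K) = ∑ y ∈ K, ind (a = y) := (sum_ind_eq K a).symm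

/-! ### Parity of adjacency and odd neighbourhoods under local complementation and pivot -/

lemma ind_lc_adj {V : Type*} (H : SimpleGraph V) (w a b : V) :
    ind ((localComp H w).Adj a b)
      = ind (H.Adj a b) + ind (H.Adj w a) * ind (H.Adj w b) + ind (a = b) * ind (H.Adj w a) := by
  show ind (a ≠ b ∧ Xor' (H.Adj a b) (H.Adj w a ∧ H.Adj w b)) = _
  by_cases hab : a = b
  · subst hab
    by_cases h1 : H.Adj w a <;>
      simp [ind, Xor', H.irrefl, h1] <;> decide
  · by_cases h1 : H.Adj a b <;> by_cases h2 : H.Adj w a <;> by_cases h3 : H.Adj w b <;>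
      simp [ind, Xor', hab, h1, h2, h3] <;> decide

lemma par_lc {V : Type*} [Fintype V] (H : SimpleGraph V) (w : V) (K : Finset V) (a : V) :
    par (localComp H w) K a
      = par H K a + ind (H.Adj w a) * par H K w + ind (a ∈ K) * ind (H.Adj w a) := by
  simp only [par, ind_lc_adj, Finset.sum_add_distrib, ← Finset.mul_sum]
  rw [← sum_ind_eq K a, ← Finset.sum_mul, Finset.mul_sum]

lemma par_pivot {V : Type*} [Fintype V] {G : SimpleGraph V} {u v : V} (huv : G.Adj u v)
    (K : Finset V) (a : V) :
    par (pivot G u v) K a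
      = par G K a + (ind (G.Adj u a) + ind (u = a)) * (par G K v + ind (v ∈ K))
          + (ind (G.Adj v a) + ind (v = a)) * (par G K u + ind (u ∈ K)) := by
  have hne : u ≠ v := huv.ne
  have hirr : ∀ b : V, ind (G.Adj b b) = 0 := fun b => ind_neg (G.irrefl)
  unfold pivot
  simp only [par_lc, ind_lc_adj]
  by_cases hua : u = a <;> by_cases hva : v = a
  · exact absurd (hua.trans hva.symm) hne
  · subst hua
    simp only [ind_pos huv, ind_pos huv.symm, hirr, ind_pos (rfl : u = u),
      ind_neg hne, ind_neg hne.symm, ind_neg hva, ind_true]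
    generalize par G K u = Pu
    generalize par G K v = Pv
    generalize ind (u ∈ K) = ku
    generalize ind (v ∈ K) = kv
    revert Pu Pv ku kv
    decide
  · subst hva
    simp only [ind_pos huv, ind_pos huv.symm, hirr, ind_pos (rfl : v = v),
      ind_neg hne, ind_neg hne.symm, ind_neg hua, ind_true]
    generalize par G K u = Pu
    generalize par G K v = Pv
    generalize ind (u ∈ K) = ku
    generalize ind (v ∈ K) = kv
    revert Pu Pv ku kv
    decide
  · simp only [ind_pos huv, ind_pos huv.symm, hirr, ind_neg hne, ind_neg hne.symm,
      ind_neg hua, ind_neg hva]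
    generalize par G K a = Pa
    generalize par G K u = Pu
    generalize par G K v = Pv
    generalize ind (a ∈ K) = ka
    generalize ind (u ∈ K) = ku
    generalize ind (v ∈ K) = kv
    generalize ind (G.Adj u a) = Au
    generalize ind (G.Adj v a) = Av
    revert Pa Pu Pv ka ku kv Au Av
    decide

/-! ### The transformed correction sets -/

/-- Toggle membership of `a` in `S`. -/
noncomputable def tog {V : Type*} [DecidableEq V] (S : Finset V) (a : V) : Finset V :=
  if a ∈ S then S.erase a else insert a S

lemma zmod2_add_add (x y : ZMod 2) : x + y + y = x := by revert x y; decide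

lemma sum_tog {V : Type*} [DecidableEq V] (S : Finset V) (a : V) (f : V → ZMod 2) :
    ∑ y ∈ tog S a, f y = (∑ y ∈ S, f y) + f a := by
  unfold tog
  by_cases h : a ∈ S
  · rw [if_pos h, ← Finset.sum_erase_add S f h]
    exact (zmod2_add_add _ _).symm
  · rw [if_neg h, Finset.sum_insert h, add_comm]

/-- The transformed correction set for the pivot about `(u, v)`. -/
noncomputable def phat {V : Type*} [Fintype V] (G : SimpleGraph V) (u v : V)
    (p : V → Finset V) (t : V) : Finset V :=
  if par G (p t) v + ind (v ∈ p t) = 1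
  then tog (if par G (p t) u + ind (u ∈ p t) = 1 then tog (p t) u else p t) v
  else if par G (p t) u + ind (u ∈ p t) = 1 then tog (p t) u else p t

lemma zmod2_not_one {a : ZMod 2} (h : a ≠ 1) : a = 0 := by revert a h; decide

section Phat

variable {V : Type*} [Fintype V] (G : SimpleGraph V) (u v : V) (p : V → Finset V)

lemma sum_phat (t : V) (f : V → ZMod 2) :
    ∑ y ∈ phat G u v p t, f y
      = (∑ y ∈ p t, f y) + (par G (p t) u + ind (u ∈ p t)) * f u
          + (par G (p t) v + ind (v ∈ p t)) * f v := by
  unfold phat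
  by_cases c1 : par G (p t) u + ind (u ∈ p t) = 1 <;>
    by_cases c2 : par G (p t) v + ind (v ∈ p t) = 1
  · rw [if_pos c2, if_pos c1, sum_tog, sum_tog, c1, c2, one_mul, one_mul]
  · rw [if_neg c2, if_pos c1, sum_tog, c1, zmod2_not_one c2, one_mul, zero_mul, add_zero]
  · rw [if_pos c2, if_neg c1, sum_tog, zmod2_not_one c1, c2, zero_mul, one_mul, add_zero]
  · rw [if_neg c2, if_neg c1, zmod2_not_one c1, zmod2_not_one c2, zero_mul, zero_mul,
      add_zero, add_zero]

lemma ind_mem_phat (t w : V) :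
    ind (w ∈ phat G u v p t)
      = ind (w ∈ p t) + (par G (p t) u + ind (u ∈ p t)) * ind (w = u)
          + (par G (p t) v + ind (v ∈ p t)) * ind (w = v) := by
  have h1 : ∀ K : Finset V, ind (w ∈ K) = ∑ y ∈ K, ind (w = y) := fun K => (sum_ind_eq K w).symm
  rw [h1, sum_phat, ← h1]

lemma par_phat (t z : V) :
    par G (phat G u v p t) z
      = par G (p t) z + (par G (p t) u + ind (u ∈ p t)) * ind (G.Adj z u)
          + (par G (p t) v + ind (v ∈ p t)) * ind (G.Adj z v) :=
  sum_phat G u v p t fun y => ind (G.Adj z y)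

lemma par_pivot_phat (huv : G.Adj u v) (t w : V) :
    par (pivot G u v) (phat G u v p t) w
      = par G (p t) w + (par G (p t) u + ind (u ∈ p t)) * ind (u = w)
          + (par G (p t) v + ind (v ∈ p t)) * ind (v = w) := by
  have hne : u ≠ v := huv.ne
  rw [par_pivot huv, par_phat, par_phat, par_phat, ind_mem_phat, ind_mem_phat]
  rw [ind_congr (G.adj_comm w u), ind_congr (G.adj_comm w v)]
  simp only [ind_pos huv, ind_pos huv.symm, ind_neg (G.irrefl : ¬ G.Adj u u),
    ind_neg (G.irrefl : ¬ G.Adj v v), ind_pos (rfl : u = u), ind_pos (rfl : v = v),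
    ind_neg hne, ind_neg hne.symm, ind_true]
  generalize par G (p t) w = Pw
  generalize par G (p t) u = Pu
  generalize par G (p t) v = Pv
  generalize ind (u ∈ p t) = ku
  generalize ind (v ∈ p t) = kv
  generalize ind (G.Adj u w) = Au
  generalize ind (G.Adj v w) = Av
  generalize ind (u = w) = eu
  generalize ind (v = w) = ev
  revert Pw Pu Pv ku kv Au Av eu ev
  decide

lemma mem_phat_ne (t w : V) (hwu : w ≠ u) (hwv : w ≠ v) :
    w ∈ phat G u v p t ↔ w ∈ p t := by
  refine ind_inj ?_
  rw [ind_mem_phat, ind_neg hwu, ind_neg hwv, mul_zero, mul_zero, add_zero, add_zero]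

lemma mem_phat_u (hne : u ≠ v) (t : V) :
    u ∈ phat G u v p t ↔ u ∈ oddNbhd G (p t) := by
  have h1 : ind (u ∈ phat G u v p t) = par G (p t) u := by
    rw [ind_mem_phat, ind_pos (rfl : u = u), ind_neg hne, mul_one, mul_zero, add_zero]
    generalize par G (p t) u = x
    generalize ind (u ∈ p t) = y
    revert x y; decide
  rw [mem_oddNbhd_iff, ← h1]
  exact ind_eq_one_iff.symm

lemma mem_phat_v (hne : u ≠ v) (t : V) :
    v ∈ phat G u v p t ↔ v ∈ oddNbhd G (p t) := by
  have h1 : ind (v ∈ phat G u v p t) = par G (p t) v := by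
    rw [ind_mem_phat, ind_pos (rfl : v = v), ind_neg hne.symm, mul_one, mul_zero, add_zero]
    generalize par G (p t) v = x
    generalize ind (v ∈ p t) = y
    revert x y; decide
  rw [mem_oddNbhd_iff, ← h1]
  exact ind_eq_one_iff.symm

lemma mem_oddN_phat_ne (huv : G.Adj u v) (t w : V) (hwu : w ≠ u) (hwv : w ≠ v) :
    w ∈ oddNbhd (pivot G u v) (phat G u v p t) ↔ w ∈ oddNbhd G (p t) := by
  rw [mem_oddNbhd_iff, mem_oddNbhd_iff, par_pivot_phat G u v p huv,
    ind_neg (Ne.symm hwu), ind_neg (Ne.symm hwv), mul_zero, mul_zero, add_zero, add_zero]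

lemma mem_oddN_phat_u (huv : G.Adj u v) (t : V) :
    u ∈ oddNbhd (pivot G u v) (phat G u v p t) ↔ u ∈ p t := by
  have key : par G (p t) u + (par G (p t) u + ind (u ∈ p t)) * ind (u = u)
      + (par G (p t) v + ind (v ∈ p t)) * ind (v = u) = ind (u ∈ p t) := by
    rw [ind_pos (rfl : u = u), ind_neg (Ne.symm huv.ne), mul_one, mul_zero, add_zero]
    generalize par G (p t) u = x
    generalize ind (u ∈ p t) = y
    revert x y; decide
  rw [mem_oddNbhd_iff, par_pivot_phat G u v p huv, key]
  exact ind_eq_one_iff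

lemma mem_oddN_phat_v (huv : G.Adj u v) (t : V) :
    v ∈ oddNbhd (pivot G u v) (phat G u v p t) ↔ v ∈ p t := by
  have key : par G (p t) v + (par G (p t) u + ind (u ∈ p t)) * ind (u = v)
      + (par G (p t) v + ind (v ∈ p t)) * ind (v = v) = ind (v ∈ p t) := by
    rw [ind_pos (rfl : v = v), ind_neg huv.ne, mul_one, mul_zero, add_zero]
    generalize par G (p t) v = x
    generalize ind (v ∈ p t) = y
    revert x y; decide
  rw [mem_oddNbhd_iff, par_pivot_phat G u v p huv, key]
  exact ind_eq_one_iff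

end Phat

lemma pl1 {l : MeasLabel} (h1 : pivotLabel l ≠ .X) (h2 : pivotLabel l ≠ .Y) :
    l ≠ .Y ∧ l ≠ .Z := by cases l <;> simp_all [pivotLabel]

lemma pl2 {l : MeasLabel} (h1 : pivotLabel l ≠ .Y) (h2 : pivotLabel l ≠ .Z) :
    l ≠ .X ∧ l ≠ .Y := by cases l <;> simp_all [pivotLabel]

lemma plY {l : MeasLabel} (h : pivotLabel l = .Y) : l = .Y := by
  cases l <;> simp_all [pivotLabel]

/-- Pivot preserves Pauli flow: if `(G, I, O, lam)` has Pauli flow and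
`(u, v)` is an edge with `u, v ∉ I ∪ O`, then the pivoted graph `G∧uv` with
labels updated by the standard pivot rule has Pauli flow. -/
theorem pivot_preserves_pauliFlow {V : Type*} [Fintype V]
    (G : SimpleGraph V) (I O : Finset V) (lam : V → MeasLabel)
    (u v : V) (huv : G.Adj u v) (hu : u ∉ I ∪ O) (hv : v ∉ I ∪ O)
    (h : HasPauliFlow G I O lam) :
    HasPauliFlow (pivot G u v) I O
      (fun w => if w = u ∨ w = v then pivotLabel (lam w) else lam w) := by
  obtain ⟨p, lt, hirr, htr, hcond⟩ := h
  have hne : u ≠ v := huv.ne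
  have huI : u ∉ I := fun hh => hu (Finset.mem_union_left _ hh)
  have hvI : v ∉ I := fun hh => hv (Finset.mem_union_left _ hh)
  refine ⟨phat G u v p, lt, hirr, htr, fun t ht => ?_⟩
  obtain ⟨o1, o2, o3, o4, o5, o6, o7, o8, o9, o10⟩ := hcond t ht
  have hLu : (if u = u ∨ u = v then pivotLabel (lam u) else lam u) = pivotLabel (lam u) :=
    if_pos (Or.inl rfl)
  have hLv : (if v = u ∨ v = v then pivotLabel (lam v) else lam v) = pivotLabel (lam v) :=
    if_pos (Or.inr rfl)
  have hLw : ∀ w : V, w ≠ u → w ≠ v →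
      (if w = u ∨ w = v then pivotLabel (lam w) else lam w) = lam w :=
    fun w h1 h2 => if_neg (by rintro (hh | hh) <;> [exact h1 hh; exact h2 hh])
  have C1 : ∀ w ∈ phat G u v p t, w ∉ I := by
    intro w hw
    by_cases hwu : w = u
    · rw [hwu]; exact huI
    · by_cases hwv : w = v
      · rw [hwv]; exact hvI
      · exact o1 w ((mem_phat_ne G u v p t w hwu hwv).mp hw)
  have C2 : ∀ w ∈ phat G u v p t,
      (if w = u ∨ w = v then pivotLabel (lam w) else lam w) ≠ .X →
      (if w = u ∨ w = v then pivotLabel (lam w) else lam w) ≠ .Y → t ≠ w → lt t w := by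
    intro w hw h1 h2 hne2
    by_cases hwu : w = u
    · rw [hwu] at hw h1 h2 hne2 ⊢
      rw [hLu] at h1 h2
      obtain ⟨hY, hZ⟩ := pl1 h1 h2
      exact o3 u ((mem_phat_u G u v p hne t).mp hw) hY hZ hne2
    · by_cases hwv : w = v
      · rw [hwv] at hw h1 h2 hne2 ⊢
        rw [hLv] at h1 h2
        obtain ⟨hY, hZ⟩ := pl1 h1 h2
        exact o3 v ((mem_phat_v G u v p hne t).mp hw) hY hZ hne2
      · rw [hLw w hwu hwv] at h1 h2
        exact o2 w ((mem_phat_ne G u v p t w hwu hwv).mp hw) h1 h2 hne2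
  have C3 : ∀ w ∈ oddNbhd (pivot G u v) (phat G u v p t),
      (if w = u ∨ w = v then pivotLabel (lam w) else lam w) ≠ .Y →
      (if w = u ∨ w = v then pivotLabel (lam w) else lam w) ≠ .Z → t ≠ w → lt t w := by
    intro w hw h1 h2 hne2
    by_cases hwu : w = u
    · rw [hwu] at hw h1 h2 hne2 ⊢
      rw [hLu] at h1 h2
      obtain ⟨hX, hY⟩ := pl2 h1 h2
      exact o2 u ((mem_oddN_phat_u G u v p huv t).mp hw) hX hY hne2
    · by_cases hwv : w = v
      · rw [hwv] at hw h1 h2 hne2 ⊢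
        rw [hLv] at h1 h2
        obtain ⟨hX, hY⟩ := pl2 h1 h2
        exact o2 v ((mem_oddN_phat_v G u v p huv t).mp hw) hX hY hne2
      · rw [hLw w hwu hwv] at h1 h2
        exact o3 w ((mem_oddN_phat_ne G u v p huv t w hwu hwv).mp hw) h1 h2 hne2
  have C4 : ∀ w, (lt w t ∨ w = t) →
      (if w = u ∨ w = v then pivotLabel (lam w) else lam w) = .Y → t ≠ w →
      (w ∈ phat G u v p t ↔ w ∈ oddNbhd (pivot G u v) (phat G u v p t)) := by
    intro w hlt hY hne2
    by_cases hwu : w = u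
    · rw [hwu] at hlt hY hne2 ⊢
      rw [hLu] at hY
      rw [mem_phat_u G u v p hne t, mem_oddN_phat_u G u v p huv t]
      exact (o4 u hlt (plY hY) hne2).symm
    · by_cases hwv : w = v
      · rw [hwv] at hlt hY hne2 ⊢
        rw [hLv] at hY
        rw [mem_phat_v G u v p hne t, mem_oddN_phat_v G u v p huv t]
        exact (o4 v hlt (plY hY) hne2).symm
      · rw [hLw w hwu hwv] at hY
        rw [mem_phat_ne G u v p t w hwu hwv, mem_oddN_phat_ne G u v p huv t w hwu hwv]
        exact o4 w hlt hY hne2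
  refine ⟨C1, C2, C3, C4, ?_, ?_, ?_, ?_, ?_, ?_⟩
  · -- XY
    intro hL
    by_cases htu : t = u
    · rw [htu] at hL o7 ⊢
      simp only [eq_self_iff_true, true_or, if_true] at hL
      rw [mem_phat_u G u v p hne u, mem_oddN_phat_u G u v p huv u]
      cases hl : lam u <;> rw [hl] at hL <;> simp only [pivotLabel] at hL <;>
        first
          | exact ⟨(o7 hl).2, (o7 hl).1⟩
          | exact absurd hL (by decide)
    · by_cases htv : t = v
      · rw [htv] at hL o7 ⊢
        simp only [eq_self_iff_true, or_true, if_true] at hL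
        rw [mem_phat_v G u v p hne v, mem_oddN_phat_v G u v p huv v]
        cases hl : lam v <;> rw [hl] at hL <;> simp only [pivotLabel] at hL <;>
          first
            | exact ⟨(o7 hl).2, (o7 hl).1⟩
            | exact absurd hL (by decide)
      · simp only [hLw t htu htv] at hL
        rw [mem_phat_ne G u v p t t htu htv, mem_oddN_phat_ne G u v p huv t t htu htv]
        exact o5 hL
  · -- XZ
    intro hL
    by_cases htu : t = u
    · rw [htu] at hL o6 ⊢
      simp only [eq_self_iff_true, true_or, if_true] at hL
      rw [mem_phat_u G u v p hne u, mem_oddN_phat_u G u v p huv u]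
      cases hl : lam u <;> rw [hl] at hL <;> simp only [pivotLabel] at hL <;>
        first
          | exact ⟨(o6 hl).2, (o6 hl).1⟩
          | exact absurd hL (by decide)
    · by_cases htv : t = v
      · rw [htv] at hL o6 ⊢
        simp only [eq_self_iff_true, or_true, if_true] at hL
        rw [mem_phat_v G u v p hne v, mem_oddN_phat_v G u v p huv v]
        cases hl : lam v <;> rw [hl] at hL <;> simp only [pivotLabel] at hL <;>
          first
            | exact ⟨(o6 hl).2, (o6 hl).1⟩
            | exact absurd hL (by decide)
      · simp only [hLw t htu htv] at hL
        rw [mem_phat_ne G u v p t t htu htv, mem_oddN_phat_ne G u v p huv t t htu htv]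
        exact o6 hL
  · -- YZ
    intro hL
    by_cases htu : t = u
    · rw [htu] at hL o5 ⊢
      simp only [eq_self_iff_true, true_or, if_true] at hL
      rw [mem_phat_u G u v p hne u, mem_oddN_phat_u G u v p huv u]
      cases hl : lam u <;> rw [hl] at hL <;> simp only [pivotLabel] at hL <;>
        first
          | exact ⟨(o5 hl).2, (o5 hl).1⟩
          | exact absurd hL (by decide)
    · by_cases htv : t = v
      · rw [htv] at hL o5 ⊢
        simp only [eq_self_iff_true, or_true, if_true] at hL
        rw [mem_phat_v G u v p hne v, mem_oddN_phat_v G u v p huv v]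
        cases hl : lam v <;> rw [hl] at hL <;> simp only [pivotLabel] at hL <;>
          first
            | exact ⟨(o5 hl).2, (o5 hl).1⟩
            | exact absurd hL (by decide)
      · simp only [hLw t htu htv] at hL
        rw [mem_phat_ne G u v p t t htu htv, mem_oddN_phat_ne G u v p huv t t htu htv]
        exact o7 hL
  · -- X
    intro hL
    by_cases htu : t = u
    · rw [htu] at hL o9 ⊢
      simp only [eq_self_iff_true, true_or, if_true] at hL
      rw [mem_oddN_phat_u G u v p huv u]
      cases hl : lam u <;> rw [hl] at hL <;> simp only [pivotLabel] at hL <;>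
        first
          | exact o9 hl
          | exact absurd hL (by decide)
    · by_cases htv : t = v
      · rw [htv] at hL o9 ⊢
        simp only [eq_self_iff_true, or_true, if_true] at hL
        rw [mem_oddN_phat_v G u v p huv v]
        cases hl : lam v <;> rw [hl] at hL <;> simp only [pivotLabel] at hL <;>
          first
            | exact o9 hl
            | exact absurd hL (by decide)
      · simp only [hLw t htu htv] at hL
        rw [mem_oddN_phat_ne G u v p huv t t htu htv]
        exact o8 hL
  · -- Z
    intro hL
    by_cases htu : t = u
    · rw [htu] at hL o8 ⊢
      simp only [eq_self_iff_true, true_or, if_true] at hL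
      rw [mem_phat_u G u v p hne u]
      cases hl : lam u <;> rw [hl] at hL <;> simp only [pivotLabel] at hL <;>
        first
          | exact o8 hl
          | exact absurd hL (by decide)
    · by_cases htv : t = v
      · rw [htv] at hL o8 ⊢
        simp only [eq_self_iff_true, or_true, if_true] at hL
        rw [mem_phat_v G u v p hne v]
        cases hl : lam v <;> rw [hl] at hL <;> simp only [pivotLabel] at hL <;>
          first
            | exact o8 hl
            | exact absurd hL (by decide)
      · simp only [hLw t htu htv] at hL
        rw [mem_phat_ne G u v p t t htu htv]
        exact o9 hL
  · -- Y
    intro hL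
    by_cases htu : t = u
    · rw [htu] at hL o10 ⊢
      simp only [eq_self_iff_true, true_or, if_true] at hL
      rw [mem_phat_u G u v p hne u, mem_oddN_phat_u G u v p huv u]
      cases hl : lam u <;> rw [hl] at hL <;> simp only [pivotLabel] at hL <;>
        first
          | exact (o10 hl).elim (fun h => Or.inr ⟨h.2, h.1⟩) (fun h => Or.inl ⟨h.2, h.1⟩)
          | exact absurd hL (by decide)
    · by_cases htv : t = v
      · rw [htv] at hL o10 ⊢
        simp only [eq_self_iff_true, or_true, if_true] at hL
        rw [mem_phat_v G u v p hne v, mem_oddN_phat_v G u v p huv v]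
        cases hl : lam v <;> rw [hl] at hL <;> simp only [pivotLabel] at hL <;>
          first
            | exact (o10 hl).elim (fun h => Or.inr ⟨h.2, h.1⟩) (fun h => Or.inl ⟨h.2, h.1⟩)
            | exact absurd hL (by decide)
      · simp only [hLw t htu htv] at hL
        rw [mem_phat_ne G u v p t t htu htv, mem_oddN_phat_ne G u v p huv t t htu htv]
        exact o10 hL
end
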